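/- Approximation theorem for relational graph models: for every λ-term M, the judgment Γ ⊢_D M : α is derivable if and only if there exists a finite approximant t ∈ BT*(M) such that Γ ⊢_D t : α is derivable. Consequently the logical interpretation of M equals the union of the logical interpretations of its finite Böhm-tree approximants. -/

import Mathlib

/-- Untyped λ⊥-terms in de Bruijn notation, intrinsically scoped:
`Tm n` is the set of λ⊥-terms with free variables among `x₀,…,x_{n-1}`. -/
inductive Tm : ℕ → Type
  | var : ∀ {n : ℕ}, Fin n → Tm n
  | lam : ∀ {n : ℕ}, Tm (n + 1) → Tm n
  | app : ∀ {n : ℕ}, Tm n → Tm n → Tm n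
  | bot : ∀ {n : ℕ}, Tm n

/-- Renaming of free variables. -/
def Tm.rename : ∀ {n m : ℕ}, (Fin n → Fin m) → Tm n → Tm m
  | _, _, f, .var k => .var (f k)
  | _, m, f, .lam t =>
      .lam (t.rename fun k => Fin.cases (motive := fun _ => Fin (m + 1)) 0
        (fun j => (f j).succ) k)
  | _, _, f, .app t u => .app (t.rename f) (u.rename f)
  | _, _, _, .bot => .bot

/-- Simultaneous (capture-avoiding) substitution. -/
def Tm.subst : ∀ {n m : ℕ}, (Fin n → Tm m) → Tm n → Tm m
  | _, _, σ, .var k => σ k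
  | _, m, σ, .lam t =>
      .lam (t.subst fun k => Fin.cases (motive := fun _ => Tm (m + 1)) (.var 0)
        (fun j => (σ j).rename Fin.succ) k)
  | _, _, σ, .app t u => .app (t.subst σ) (u.subst σ)
  | _, _, _, .bot => .bot

/-- Substitution `M{N/y}` of `N` for the 0-th free variable of `M`. -/
def Tm.subst1 {n : ℕ} (M : Tm (n + 1)) (N : Tm n) : Tm n :=
  M.subst (Fin.cases (motive := fun _ => Tm n) N Tm.var)

/-- One-step β-reduction (contextual closure of `(λx.M)N → M{N/x}`). -/
inductive Beta : ∀ {n : ℕ}, Tm n → Tm n → Prop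
  | redex {n} (M : Tm (n + 1)) (N : Tm n) : Beta (.app (.lam M) N) (M.subst1 N)
  | appL {n} {M M' N : Tm n} : Beta M M' → Beta (.app M N) (.app M' N)
  | appR {n} {M N N' : Tm n} : Beta N N' → Beta (.app M N) (.app M N')
  | lam {n} {M M' : Tm (n + 1)} : Beta M M' → Beta (.lam M) (.lam M')

/-- A λ⊥-term is a λ-term when it contains no occurrence of `⊥`. -/
def BotFree : ∀ {n : ℕ}, Tm n → Prop
  | _, .var _ => True
  | _, .lam M => BotFree M
  | _, .app M N => BotFree M ∧ BotFree N
  | _, .bot => False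

/-- The environment assigning the multiset `[α]` to the variable `k` and `0` elsewhere. -/
def single {D : Type} {n : ℕ} (k : Fin n) (α : D) : Fin n → Multiset D :=
  fun j => if j = k then {α} else 0

/-- The relational interpretation `⟦M⟧_{x̄} ⊆ M_f(D)ⁿ × D` of a λ⊥-term in a relational
graph model `(D, i)`. -/
def Interp {D : Type} (i : Multiset D × D → D) :
    ∀ {n : ℕ}, Tm n → Set ((Fin n → Multiset D) × D)
  | _, .var k => {p | ∃ α, p = (single k α, α)}
  | _, .lam M => {p | ∃ Γ a α, (Fin.cons a Γ, α) ∈ Interp i M ∧ p = (Γ, i (a, α))}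
  | n, .app M N =>
      {p | ∃ (Γ₀ : Fin n → Multiset D) (l : List ((Fin n → Multiset D) × D)),
        (Γ₀, i (↑(l.map Prod.snd), p.2)) ∈ Interp i M ∧
        (∀ q ∈ l, q ∈ Interp i N) ∧ p.1 = Γ₀ + (l.map Prod.fst).sum}
  | _, .bot => ∅

/-- The non-idempotent intersection type system associated with a relational graph model
`(D, i)`: `Der i Γ M α m` states that the judgment `Γ ⊢ M : α` is derivable by a
derivation `π` with `#app(π) = m` occurrences of the application rule. -/
inductive Der {D : Type} (i : Multiset D × D → D) :
    ∀ {n : ℕ}, (Fin n → Multiset D) → Tm n → D → ℕ → Prop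
  | var {n} (k : Fin n) (α : D) : Der i (single k α) (.var k) α 0
  | lam {n} {Γ : Fin n → Multiset D} {a : Multiset D} {M : Tm (n + 1)} {α : D} {m : ℕ} :
      Der i (Fin.cons a Γ) M α m → Der i Γ (.lam M) (i (a, α)) m
  | app {n} {Γ : Fin n → Multiset D} {M N : Tm n} {α : D} {m : ℕ}
      (l : List ((Fin n → Multiset D) × D × ℕ)) :
      Der i Γ M (i (↑(l.map fun q => q.2.1), α)) m →
      (∀ q ∈ l, Der i q.1 N q.2.1 q.2.2) →
      Der i (Γ + (l.map fun q => q.1).sum) (.app M N) α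
        (m + (l.map fun q => q.2.2).sum + 1)

/-- The direct approximant `ω(M)` of a λ⊥-term. -/
def Da : ∀ {n : ℕ}, Tm n → Tm n
  | _, .var k => .var k
  | _, .bot => .bot
  | _, .lam M =>
      match Da M with
      | .bot => .bot
      | M' => .lam M'
  | _, .app M N =>
      match Da M with
      | .bot => .bot
      | .lam _ => .bot
      | M' => .app M' (Da N)

section Aux
open Relation

variable {D : Type}

/-- Approximation order on `λ⊥`-terms. -/
inductive Le : ∀ {n : ℕ}, Tm n → Tm n → Prop
  | bot {n} (t : Tm n) : Le .bot t
  | var {n} (k : Fin n) : Le (.var k) (.var k)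
  | lam {n} {t s : Tm (n + 1)} : Le t s → Le (.lam t) (.lam s)
  | app {n} {t₁ s₁ t₂ s₂ : Tm n} : Le t₁ s₁ → Le t₂ s₂ → Le (.app t₁ t₂) (.app s₁ s₂)

theorem Le.refl : ∀ {n : ℕ} (t : Tm n), Le t t
  | _, .var k => .var k
  | _, .bot => .bot _
  | _, .lam t => .lam (Le.refl t)
  | _, .app t u => .app (Le.refl t) (Le.refl u)

theorem le_var_inv {n} {k : Fin n} {s : Tm n} (h : Le (.var k) s) : s = .var k := by
  cases h; rfl

theorem le_lam_inv {n} {t : Tm (n+1)} {s : Tm n} (h : Le (.lam t) s) :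
    ∃ s', s = .lam s' ∧ Le t s' := by
  cases h with | lam h => exact ⟨_, rfl, h⟩

theorem le_app_inv {n} {t₁ t₂ : Tm n} {s : Tm n} (h : Le (.app t₁ t₂) s) :
    ∃ s₁ s₂, s = .app s₁ s₂ ∧ Le t₁ s₁ ∧ Le t₂ s₂ := by
  cases h with | app h₁ h₂ => exact ⟨_, _, rfl, h₁, h₂⟩

/-- Typability is monotone along the approximation order, preserving size. -/
theorem der_mono (i : Multiset D × D → D) :
    ∀ {n : ℕ} {Γ : Fin n → Multiset D} {t : Tm n} {α : D} {p : ℕ},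
    Der i Γ t α p → ∀ {s : Tm n}, Le t s → Der i Γ s α p := by
  intro n Γ t α p h
  induction h with
  | var k α => intro s hs; rw [le_var_inv hs]; exact Der.var k α
  | lam h ih =>
    intro s hs
    obtain ⟨s', rfl, hs'⟩ := le_lam_inv hs
    exact Der.lam (ih hs')
  | app l h hargs ih ihargs =>
    intro s hs
    obtain ⟨s₁, s₂, rfl, h₁, h₂⟩ := le_app_inv hs
    exact Der.app l (ih h₁) (fun q hq => ihargs q hq h₂)

theorem der_bot_inv (i : Multiset D × D → D) {n} {Γ : Fin n → Multiset D} {α p}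
    (h : Der i Γ (.bot : Tm n) α p) : False := by cases h

theorem der_var_inv (i : Multiset D × D → D) {n} {Γ : Fin n → Multiset D} {k : Fin n} {α p}
    (h : Der i Γ (.var k) α p) : Γ = single k α ∧ p = 0 := by
  cases h; exact ⟨rfl, rfl⟩

theorem der_lam_inv (i : Multiset D × D → D) {n} {Γ : Fin n → Multiset D} {M : Tm (n+1)} {β p}
    (h : Der i Γ (.lam M) β p) :
    ∃ a α, β = i (a, α) ∧ Der i (Fin.cons a Γ) M α p := by
  cases h with | lam h => exact ⟨_, _, rfl, h⟩

end Aux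

section Push
variable {D : Type}

/-- The environment with multiset `a` at `k` and `0` elsewhere. -/
def onehot {n : ℕ} (k : Fin n) (a : Multiset D) : Fin n → Multiset D :=
  fun j => if j = k then a else 0

@[simp] theorem onehot_zero {n} (k : Fin n) : (onehot k (0 : Multiset D)) = 0 := by
  funext j; simp [onehot]

theorem onehot_add {n} (k : Fin n) (a b : Multiset D) :
    onehot k (a + b) = onehot k a + onehot k b := by
  funext j; by_cases h : j = k <;> simp [onehot, h]

theorem single_eq_onehot {n} (k : Fin n) (α : D) : single k α = onehot k {α} := rfl

theorem sum_onehot {n} (Γ : Fin n → Multiset D) : (∑ k, onehot k (Γ k)) = Γ := by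
  funext j
  rw [Finset.sum_apply]
  simp [onehot]

/-- Pushforward of an environment along a renaming. -/
def push {n m : ℕ} (f : Fin n → Fin m) (Γ : Fin n → Multiset D) : Fin m → Multiset D :=
  fun j => ∑ x, if f x = j then Γ x else 0

theorem push_zero {n m} (f : Fin n → Fin m) : push f (0 : Fin n → Multiset D) = 0 := by
  funext j; simp [push]

theorem push_add {n m} (f : Fin n → Fin m) (Γ Δ : Fin n → Multiset D) :
    push f (Γ + Δ) = push f Γ + push f Δ := by
  funext j
  show (∑ x, if f x = j then Γ x + Δ x else 0) =
    (∑ x, if f x = j then Γ x else 0) + (∑ x, if f x = j then Δ x else 0)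
  rw [← Finset.sum_add_distrib]
  apply Finset.sum_congr rfl
  intro x _
  by_cases hx : f x = j <;> simp [hx]

theorem push_list_sum {n m} (f : Fin n → Fin m) (L : List (Fin n → Multiset D)) :
    push f L.sum = (L.map (push f)).sum := by
  induction L with
  | nil => exact push_zero f
  | cons a L ih => rw [List.sum_cons, push_add, ih, List.map_cons, List.sum_cons]

theorem push_apply {n m} {f : Fin n → Fin m} (hf : Function.Injective f)
    (Γ : Fin n → Multiset D) (x : Fin n) : push f Γ (f x) = Γ x := by
  rw [push, Finset.sum_eq_single x]
  · simp
  · intro b _ hb; rw [if_neg (fun h => hb (hf h))]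
  · simp

theorem push_single {n m} {f : Fin n → Fin m} (hf : Function.Injective f)
    (k : Fin n) (α : D) : push f (single k α) = single (f k) α := by
  funext j
  by_cases h : j = f k
  · subst h; rw [push_apply hf, single, if_pos rfl, single, if_pos rfl]
  · rw [single, if_neg h, push]
    apply Finset.sum_eq_zero
    intro x _
    by_cases hx : f x = j
    · rw [if_pos hx, single, if_neg]
      rintro rfl; exact h hx.symm
    · rw [if_neg hx]

/-- Lifting of a renaming under a binder. -/
def liftR {n m : ℕ} (f : Fin n → Fin m) : Fin (n+1) → Fin (m+1) :=
  fun k => Fin.cases (motive := fun _ => Fin (m + 1)) 0 (fun j => (f j).succ) k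

theorem liftR_inj {n m} {f : Fin n → Fin m} (hf : Function.Injective f) :
    Function.Injective (liftR f) := by
  intro a b hab
  cases a using Fin.cases with
  | zero => cases b using Fin.cases with
    | zero => rfl
    | succ b => simp [liftR] at hab; exact absurd hab.symm (Fin.succ_ne_zero _)
  | succ a => cases b using Fin.cases with
    | zero => simp [liftR] at hab
    | succ b => simp [liftR, Fin.succ_inj] at hab; rw [hf hab]

@[simp] theorem liftR_zero {n m} (f : Fin n → Fin m) : liftR f 0 = 0 := rfl
@[simp] theorem liftR_succ {n m} (f : Fin n → Fin m) (j : Fin n) :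
    liftR f j.succ = (f j).succ := rfl

theorem push_liftR_cons {n m} (f : Fin n → Fin m) (a : Multiset D) (Γ : Fin n → Multiset D) :
    push (liftR f) (Fin.cons a Γ) = Fin.cons a (push f Γ) := by
  funext j
  cases j using Fin.cases with
  | zero =>
    rw [push, Fin.sum_univ_succ]
    simp [Fin.succ_ne_zero]
  | succ j =>
    rw [push, Fin.sum_univ_succ]
    simp [push, (Fin.succ_ne_zero j).symm, Fin.succ_inj]

theorem push_succ_zero {n} (Γ : Fin n → Multiset D) : push Fin.succ Γ 0 = 0 := by
  rw [push]; apply Finset.sum_eq_zero; intro x _; simp [Fin.succ_ne_zero]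

theorem push_succ_succ {n} (Γ : Fin n → Multiset D) (j : Fin n) :
    push Fin.succ Γ j.succ = Γ j :=
  push_apply (Fin.succ_injective n) Γ j

theorem rename_liftR {n m} (f : Fin n → Fin m) (t : Tm (n+1)) :
    (Tm.rename (fun k => Fin.cases (motive := fun _ => Fin (m + 1)) 0
        (fun j => (f j).succ) k) t) = t.rename (liftR f) := rfl

end Push

section ListHelpers

theorem exists_forall₂ {A B : Type*} {P : A → B → Prop} :
    ∀ (l : List A), (∀ q ∈ l, ∃ b, P q b) → ∃ l', List.Forall₂ P l l'
  | [], _ => ⟨[], List.Forall₂.nil⟩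
  | a :: l, h => by
    obtain ⟨b, hb⟩ := h a (.head l)
    obtain ⟨l', hl'⟩ := exists_forall₂ l (fun q hq => h q (.tail a hq))
    exact ⟨b :: l', List.Forall₂.cons hb hl'⟩

theorem forall₂_map_eq {A B C : Type*} {P : A → B → Prop} {f : A → C} {g : B → C}
    (hfg : ∀ a b, P a b → f a = g b) :
    ∀ {l : List A} {l' : List B}, List.Forall₂ P l l' → l.map f = l'.map g := by
  intro l l' h
  induction h with
  | nil => rfl
  | cons hab _ ih => simp only [List.map_cons, ih, hfg _ _ hab]

theorem forall₂_sum_le {A B : Type*} {P : A → B → Prop} {f : A → ℕ} {g : B → ℕ}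
    (hfg : ∀ a b, P a b → g b ≤ f a) :
    ∀ {l : List A} {l' : List B}, List.Forall₂ P l l' →
      (l'.map g).sum ≤ (l.map f).sum := by
  intro l l' h
  induction h with
  | nil => exact le_refl _
  | cons hab _ ih =>
    simp only [List.map_cons, List.sum_cons]
    exact Nat.add_le_add (hfg _ _ hab) ih

theorem forall₂_mem {A B : Type*} {P : A → B → Prop} :
    ∀ {l : List A} {l' : List B}, List.Forall₂ P l l' → ∀ b ∈ l', ∃ a ∈ l, P a b := by
  intro l l' h
  induction h with
  | nil => intro b hb; cases hb
  | cons hab h ih =>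
    intro b hb
    rcases List.mem_cons.1 hb with rfl | hb
    · exact ⟨_, .head _, hab⟩
    · obtain ⟨a, ha, hPa⟩ := ih b hb
      exact ⟨a, .tail _ ha, hPa⟩

end ListHelpers

section Rename
variable {D : Type} (i : Multiset D × D → D)

theorem push_liftR_zero {D : Type} {n m : ℕ} (f : Fin n → Fin m) (Γ : Fin (n+1) → Multiset D) :
    push (liftR f) Γ 0 = Γ 0 := by
  rw [push, Fin.sum_univ_succ]
  simp [Fin.succ_ne_zero]

theorem push_liftR_succ {D : Type} {n m : ℕ} (f : Fin n → Fin m) (Γ : Fin (n+1) → Multiset D)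
    (j : Fin m) : push (liftR f) Γ j.succ = push f (Fin.tail Γ) j := by
  rw [push, Fin.sum_univ_succ, liftR_zero,
    if_neg (fun h => Fin.succ_ne_zero j h.symm), zero_add]
  simp only [liftR_succ, Fin.succ_inj]
  rfl

theorem der_rename :
    ∀ {n : ℕ} {Γ : Fin n → Multiset D} {t : Tm n} {α : D} {p : ℕ},
    Der i Γ t α p → ∀ {m : ℕ} {f : Fin n → Fin m}, Function.Injective f →
    Der i (push f Γ) (t.rename f) α p := by
  intro n Γ t α p h
  induction h with
  | var k α =>
    intro m f hf
    rw [push_single hf]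
    exact Der.var (f k) α
  | lam h ih =>
    intro m f hf
    show Der i _ (.lam _) _ _
    rw [rename_liftR]
    exact Der.lam (by rw [← push_liftR_cons]; exact ih (liftR_inj hf))
  | app l h hargs ih ihargs =>
    intro m f hf
    simp only [Tm.rename]
    rw [push_add, push_list_sum]
    have h1 : ((l.map fun q => q.1).map (push f))
        = (l.map fun q => (push f q.1, q.2)).map fun q => q.1 := by
      rw [List.map_map, List.map_map]; rfl
    have h2 : (l.map fun q => q.2.2)
        = ((l.map fun q => (push f q.1, q.2)).map fun q => q.2.2) := by
      rw [List.map_map]; rfl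
    have h3 : (l.map fun q => q.2.1)
        = ((l.map fun q => (push f q.1, q.2)).map fun q => q.2.1) := by
      rw [List.map_map]; rfl
    rw [h1, h2]
    refine Der.app _ ?_ ?_
    · rw [← h3]; exact ih hf
    · intro q hq
      obtain ⟨q₀, hq₀, rfl⟩ := List.mem_map.1 hq
      exact ihargs q₀ hq₀ hf

theorem der_rename_inv :
    ∀ {n : ℕ} (t : Tm n) {m : ℕ} {f : Fin n → Fin m}, Function.Injective f →
    ∀ {Δ : Fin m → Multiset D} {α : D} {p : ℕ},
    Der i Δ (t.rename f) α p → ∃ Γ, Δ = push f Γ ∧ Der i Γ t α p := by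
  intro n t
  induction t with
  | var k =>
    intro m f hf Δ α p h
    simp only [Tm.rename] at h
    obtain ⟨rfl, rfl⟩ := der_var_inv i h
    exact ⟨single k α, (push_single hf k α).symm, Der.var k α⟩
  | bot =>
    intro m f hf Δ α p h
    simp only [Tm.rename] at h
    exact absurd h (der_bot_inv i)
  | lam t ih =>
    intro m f hf Δ α p h
    simp only [Tm.rename] at h
    rw [rename_liftR] at h
    obtain ⟨a, α₀, rfl, h₀⟩ := der_lam_inv i h
    obtain ⟨Gp, hΓ, hd⟩ := ih (liftR_inj hf) h₀
    have ha : a = Gp 0 := by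
      have := congrFun hΓ 0
      rwa [Fin.cons_zero, push_liftR_zero] at this
    have hΔ : Δ = push f (Fin.tail Gp) := by
      funext j
      have := congrFun hΓ j.succ
      rwa [Fin.cons_succ, push_liftR_succ] at this
    refine ⟨Fin.tail Gp, hΔ, ?_⟩
    rw [ha]
    exact Der.lam (by rwa [Fin.cons_self_tail])
  | app t u iht ihu =>
    intro m f hf Δ α p h
    simp only [Tm.rename] at h
    cases h with
    | app l h hargs =>
      obtain ⟨Γ₁, rfl, hd₁⟩ := iht hf h
      obtain ⟨l', hl'⟩ := exists_forall₂
        (P := fun (q : (Fin m → Multiset D) × D × ℕ) (b : (Fin _ → Multiset D) × D × ℕ) =>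
          q.1 = push f b.1 ∧ q.2 = b.2 ∧ Der i b.1 u b.2.1 b.2.2)
        l (fun q hq => by
          obtain ⟨G, hG1, hG2⟩ := ihu hf (hargs q hq)
          exact ⟨(G, q.2), hG1, rfl, hG2⟩)
      have htys : l.map (fun q => q.2.1) = l'.map (fun q => q.2.1) :=
        forall₂_map_eq (fun a b hab => by rw [hab.2.1]) hl'
      have hszs : l.map (fun q => q.2.2) = l'.map (fun q => q.2.2) :=
        forall₂_map_eq (fun a b hab => by rw [hab.2.1]) hl'
      have hctx : l.map (fun q => q.1) = l'.map (fun q => push f q.1) :=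
        forall₂_map_eq (fun a b hab => hab.1) hl'
      refine ⟨Γ₁ + (l'.map fun q => q.1).sum, ?_, ?_⟩
      · rw [push_add, push_list_sum, List.map_map]
        congr 1
        rw [hctx]; rfl
      · rw [hszs]
        exact Der.app l' (by rw [← htys]; exact hd₁)
          (fun b hb => by
            obtain ⟨a, _, hab⟩ := forall₂_mem hl' b hb
            exact hab.2.2)

end Rename

section Ders
variable {D : Type} (i : Multiset D × D → D)

/-- A bag of derivations of `N` with types `a`, contexts summing to `E`, sizes summing to `s`. -/
def Ders {n : ℕ} (N : Tm n) (E : Fin n → Multiset D) (a : Multiset D) (s : ℕ) : Prop :=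
  ∃ l : List ((Fin n → Multiset D) × D × ℕ),
    (↑(l.map fun q => q.2.1) : Multiset D) = a ∧
    (∀ q ∈ l, Der i q.1 N q.2.1 q.2.2) ∧
    (l.map fun q => q.1).sum = E ∧ (l.map fun q => q.2.2).sum = s

variable {i}

theorem Ders.zero {n : ℕ} (N : Tm n) : Ders i N 0 0 0 :=
  ⟨[], rfl, fun q hq => absurd hq List.not_mem_nil, rfl, rfl⟩

theorem Ders.ofDer {n : ℕ} {N : Tm n} {Γ α p} (h : Der i Γ N α p) :
    Ders i N Γ {α} p :=
  ⟨[(Γ, α, p)], rfl, fun q hq => by rw [List.mem_singleton.1 hq]; exact h,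
    by simp, by simp⟩

theorem Ders.add {n : ℕ} {N : Tm n} {E₁ E₂ a₁ a₂ s₁ s₂}
    (h₁ : Ders i N E₁ a₁ s₁) (h₂ : Ders i N E₂ a₂ s₂) :
    Ders i N (E₁ + E₂) (a₁ + a₂) (s₁ + s₂) := by
  obtain ⟨l₁, ht₁, hd₁, hc₁, hs₁⟩ := h₁
  obtain ⟨l₂, ht₂, hd₂, hc₂, hs₂⟩ := h₂
  refine ⟨l₁ ++ l₂, ?_, ?_, ?_, ?_⟩
  · rw [List.map_append, ← Multiset.coe_add, ht₁, ht₂]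
  · intro q hq; rcases List.mem_append.1 hq with h | h
    · exact hd₁ q h
    · exact hd₂ q h
  · rw [List.map_append, List.sum_append, hc₁, hc₂]
  · rw [List.map_append, List.sum_append, hs₁, hs₂]

theorem Ders.var {n : ℕ} (k : Fin n) (a : Multiset D) :
    Ders i (.var k) (onehot k a) a 0 := by
  induction a using Multiset.induction with
  | empty => rw [onehot_zero]; exact Ders.zero _
  | cons α a ih =>
    have := Ders.add (Ders.ofDer (Der.var (i := i) k α)) ih
    rw [single_eq_onehot, ← onehot_add] at this
    simpa using this

theorem Ders.var_inv {n : ℕ} {k : Fin n} {E a s} (h : Ders i (.var k : Tm n) E a s) :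
    E = onehot k a := by
  obtain ⟨l, ht, hd, hc, -⟩ := h
  subst ht hc
  induction l with
  | nil => simp
  | cons q l ih =>
    simp only [List.map_cons, List.sum_cons] at *
    obtain ⟨h1, -⟩ := der_var_inv i (hd q (.head l))
    rw [h1, ih (fun q hq => hd q (.tail _ hq)), single_eq_onehot, ← onehot_add]
    congr 1

theorem Ders.zero_inv {n : ℕ} {N : Tm n} {E s} (h : Ders i N E 0 s) : E = 0 ∧ s = 0 := by
  obtain ⟨l, ht, -, hc, hs⟩ := h
  have : l = [] := by
    cases l with
    | nil => rfl
    | cons q l => simp at ht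
  subst this
  exact ⟨hc.symm, hs.symm⟩

theorem Ders.singleton_inv {n : ℕ} {N : Tm n} {E α s} (h : Ders i N E {α} s) :
    Der i E N α s := by
  obtain ⟨l, ht, hd, hc, hs⟩ := h
  have hperm : l.map (fun q => q.2.1) = [α] :=
    List.perm_singleton.1
      (Multiset.coe_eq_coe.1 (ht.trans (Multiset.coe_singleton α).symm))
  cases l with
  | nil => simp at hperm
  | cons q l =>
    simp only [List.map_cons, List.cons.injEq, List.map_eq_nil_iff] at hperm
    obtain ⟨hα, rfl⟩ := hperm
    have := hd q (.head _)
    rw [hα] at this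
    simpa [← hc, ← hs] using this

theorem Ders.rename {n m : ℕ} {N : Tm n} {f : Fin n → Fin m} (hf : Function.Injective f)
    {E a s} (h : Ders i N E a s) : Ders i (N.rename f) (push f E) a s := by
  obtain ⟨l, ht, hd, hc, hs⟩ := h
  refine ⟨l.map fun q => (push f q.1, q.2), ?_, ?_, ?_, ?_⟩
  · rw [List.map_map]; exact ht
  · intro q hq
    obtain ⟨q₀, hq₀, rfl⟩ := List.mem_map.1 hq
    exact der_rename i (hd q₀ hq₀) hf
  · rw [List.map_map, ← hc, push_list_sum, List.map_map]; rfl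
  · rw [List.map_map]; exact hs

theorem Ders.rename_inv {n m : ℕ} {N : Tm n} {f : Fin n → Fin m} (hf : Function.Injective f)
    {E a s} (h : Ders i (N.rename f) E a s) :
    ∃ E₀, E = push f E₀ ∧ Ders i N E₀ a s := by
  obtain ⟨l, ht, hd, hc, hs⟩ := h
  obtain ⟨l', hl'⟩ := exists_forall₂
    (P := fun (q : (Fin m → Multiset D) × D × ℕ) (b : (Fin n → Multiset D) × D × ℕ) =>
      q.1 = push f b.1 ∧ q.2 = b.2 ∧ Der i b.1 N b.2.1 b.2.2)
    l (fun q hq => by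
      obtain ⟨G, hG1, hG2⟩ := der_rename_inv i N hf (hd q hq)
      exact ⟨(G, q.2), hG1, rfl, hG2⟩)
  have htys : l.map (fun q => q.2.1) = l'.map (fun q => q.2.1) :=
    forall₂_map_eq (fun a b hab => by rw [hab.2.1]) hl'
  have hszs : l.map (fun q => q.2.2) = l'.map (fun q => q.2.2) :=
    forall₂_map_eq (fun a b hab => by rw [hab.2.1]) hl'
  have hctx : l.map (fun q => q.1) = l'.map (fun q => push f q.1) :=
    forall₂_map_eq (fun a b hab => hab.1) hl'
  refine ⟨(l'.map fun q => q.1).sum, ?_, l', ?_, ?_, rfl, ?_⟩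
  · rw [← hc, hctx, push_list_sum, List.map_map]; rfl
  · rw [← ht, htys]
  · intro b hb
    obtain ⟨a, -, hab⟩ := forall₂_mem hl' b hb
    exact hab.2.2
  · rw [← hs, hszs]

/-- Splitting a list of values whose multiset of images decomposes as a sum. -/
theorem list_split {T : Type*} {g : T → D} :
    ∀ (a : Multiset D) {b : Multiset D} (l : List T), (↑(l.map g) : Multiset D) = a + b →
    ∃ l₁ l₂ : List T, (↑(l₁.map g) : Multiset D) = a ∧ (↑(l₂.map g) : Multiset D) = b ∧
      List.Perm (l₁ ++ l₂) l := by
  intro a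
  induction a using Multiset.induction with
  | empty =>
    intro b l h
    exact ⟨[], l, rfl, by simpa using h, by simp⟩
  | cons α a ih =>
    intro b l h
    have hα : α ∈ l.map g := by
      rw [← Multiset.mem_coe, h]; simp
    obtain ⟨x, hx, hgx⟩ := List.mem_map.1 hα
    obtain ⟨s, t, rfl⟩ := List.append_of_mem hx
    have hperm : List.Perm (s ++ x :: t) (x :: (s ++ t)) := List.perm_middle
    have h2 : (↑((s ++ t).map g) : Multiset D) = a + b := by
      have hcoe : (↑((s ++ x :: t).map g) : Multiset D) = ↑((x :: (s ++ t)).map g) :=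
        Multiset.coe_eq_coe.2 (hperm.map g)
      rw [hcoe, List.map_cons, ← Multiset.cons_coe, hgx, Multiset.cons_add] at h
      exact (Multiset.cons_inj_right α).1 h
    obtain ⟨l₁, l₂, h₁, h₂, hp⟩ := ih (s ++ t) h2
    refine ⟨x :: l₁, l₂, ?_, h₂, ?_⟩
    · rw [List.map_cons, ← Multiset.cons_coe, hgx, h₁]
    · show List.Perm (x :: (l₁ ++ l₂)) _
      exact (hp.cons x).trans hperm.symm

theorem Ders.split {n : ℕ} {N : Tm n} {E a b s} (h : Ders i N E (a + b) s) :
    ∃ E₁ E₂ s₁ s₂, E = E₁ + E₂ ∧ s = s₁ + s₂ ∧ Ders i N E₁ a s₁ ∧ Ders i N E₂ b s₂ := by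
  obtain ⟨l, ht, hd, hc, hs⟩ := h
  obtain ⟨l₁, l₂, h₁, h₂, hp⟩ := list_split a l ht
  refine ⟨(l₁.map fun q => q.1).sum, (l₂.map fun q => q.1).sum,
    (l₁.map fun q => q.2.2).sum, (l₂.map fun q => q.2.2).sum, ?_, ?_,
    ⟨l₁, h₁, fun q hq => hd q (hp.mem_iff.1 (List.mem_append.2 (Or.inl hq))), rfl, rfl⟩,
    ⟨l₂, h₂, fun q hq => hd q (hp.mem_iff.1 (List.mem_append.2 (Or.inr hq))), rfl, rfl⟩⟩
  · rw [← hc, ← List.sum_append, ← List.map_append]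
    exact ((hp.map _).sum_eq).symm
  · rw [← hs, ← List.sum_append, ← List.map_append]
    exact ((hp.map _).sum_eq).symm

end Ders

section Subst
variable {D : Type} {i : Multiset D × D → D}

/-- Lifting of a substitution under a binder. -/
def liftS {n m : ℕ} (σ : Fin n → Tm m) : Fin (n+1) → Tm (m+1) :=
  fun k => Fin.cases (motive := fun _ => Tm (m + 1)) (.var 0)
      (fun j => (σ j).rename Fin.succ) k

theorem subst_lam {n m} (σ : Fin n → Tm m) (t : Tm (n+1)) :
    Tm.subst σ (.lam t) = .lam (t.subst (liftS σ)) := rfl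

@[simp] theorem liftS_zero {n m} (σ : Fin n → Tm m) : liftS σ 0 = .var 0 := rfl
@[simp] theorem liftS_succ {n m} (σ : Fin n → Tm m) (j : Fin n) :
    liftS σ j.succ = (σ j).rename Fin.succ := rfl

theorem subst_args {n m : ℕ} {N : Tm n} (σ : Fin n → Tm m) :
    ∀ (l : List ((Fin n → Multiset D) × D × ℕ)),
    (∀ q ∈ l, ∀ (E : Fin n → Fin m → Multiset D) (s : Fin n → ℕ),
      (∀ k, Ders i (σ k) (E k) (q.1 k) (s k)) →
      ∃ q' ≤ q.2.2 + ∑ k, s k, Der i (∑ k, E k) (N.subst σ) q.2.1 q') →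
    ∀ (E : Fin n → Fin m → Multiset D) (s : Fin n → ℕ),
    (∀ k, Ders i (σ k) (E k) (((l.map Prod.fst).sum) k) (s k)) →
    ∃ l' : List ((Fin m → Multiset D) × D × ℕ),
      l'.map (fun q => q.2.1) = l.map (fun q => q.2.1) ∧
      (∀ q ∈ l', Der i q.1 (N.subst σ) q.2.1 q.2.2) ∧
      (l'.map fun q => q.1).sum = ∑ k, E k ∧
      (l'.map fun q => q.2.2).sum ≤ (l.map fun q => q.2.2).sum + ∑ k, s k := by
  intro l
  induction l with
  | nil =>
    intro _ E s hE
    have hz : ∀ k, E k = 0 ∧ s k = 0 := fun k => Ders.zero_inv (hE k)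
    refine ⟨[], rfl, fun q hq => absurd hq List.not_mem_nil, ?_, ?_⟩
    · exact (Finset.sum_eq_zero fun k _ => (hz k).1).symm
    · simp
  | cons q l ih =>
    intro hips E s hE
    have hsplit : ∀ k, ∃ E₁ E₂ s₁ s₂, E k = E₁ + E₂ ∧ s k = s₁ + s₂ ∧
        Ders i (σ k) E₁ (q.1 k) s₁ ∧
        Ders i (σ k) E₂ (((l.map Prod.fst).sum) k) s₂ := by
      intro k
      have h := hE k
      rw [List.map_cons, List.sum_cons] at h
      have h' : Ders i (σ k) (E k) (q.1 k + ((l.map Prod.fst).sum) k) (s k) := h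
      obtain ⟨E₁, E₂, s₁, s₂, h1, h2, h3, h4⟩ := h'.split
      exact ⟨E₁, E₂, s₁, s₂, h1, h2, h3, h4⟩
    choose E₁ E₂ s₁ s₂ hEadd hsadd hD1 hD2 using hsplit
    obtain ⟨q', hq', hd'⟩ := hips q (.head l) E₁ s₁ hD1
    obtain ⟨l'', htys, hders, hctx, hsz⟩ :=
      ih (fun r hr => hips r (.tail q hr)) E₂ s₂ hD2
    refine ⟨((∑ k, E₁ k), q.2.1, q') :: l'', ?_, ?_, ?_, ?_⟩
    · rw [List.map_cons, List.map_cons, htys]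
    · intro r hr
      rcases List.mem_cons.1 hr with rfl | hr
      · exact hd'
      · exact hders r hr
    · rw [List.map_cons, List.sum_cons, hctx, ← Finset.sum_add_distrib]
      exact Finset.sum_congr rfl fun k _ => (hEadd k).symm
    · rw [List.map_cons, List.sum_cons, List.map_cons, List.sum_cons]
      have h5 : ∑ k, s k = (∑ k, s₁ k) + ∑ k, s₂ k := by
        rw [← Finset.sum_add_distrib]; exact Finset.sum_congr rfl fun k _ => hsadd k
      have h6 : (((∑ k, E₁ k), q.2.1, q') : (Fin _ → Multiset D) × D × ℕ).2.2 = q' := rfl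
      rw [h6]
      omega

theorem der_subst :
    ∀ {n : ℕ} {Γ : Fin n → Multiset D} {M : Tm n} {α : D} {p : ℕ},
    Der i Γ M α p →
    ∀ {m : ℕ} (σ : Fin n → Tm m) (E : Fin n → Fin m → Multiset D) (s : Fin n → ℕ),
    (∀ k, Ders i (σ k) (E k) (Γ k) (s k)) →
    ∃ q ≤ p + ∑ k, s k, Der i (∑ k, E k) (M.subst σ) α q := by
  intro n Γ M α p h
  induction h with
  | var k α =>
    intro m σ E s hE
    have h0 : ∀ j, j ≠ k → E j = 0 ∧ s j = 0 := by
      intro j hj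
      have h := hE j
      rw [show single k α j = 0 by rw [single, if_neg hj]] at h
      exact Ders.zero_inv h
    have hk : Der i (E k) (σ k) α (s k) := by
      have h := hE k
      rw [show single k α k = {α} by rw [single, if_pos rfl]] at h
      exact h.singleton_inv
    have hEsum : (∑ j, E j) = E k :=
      Finset.sum_eq_single_of_mem k (Finset.mem_univ k) (fun b _ hb => (h0 b hb).1)
    have hssum : (∑ j, s j) = s k :=
      Finset.sum_eq_single_of_mem k (Finset.mem_univ k) (fun b _ hb => (h0 b hb).2)
    exact ⟨s k, by omega, by rw [hEsum]; exact hk⟩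
  | lam h ih =>
    rename_i n' Γ' a M' α' p' 
    intro m σ E s hE
    have hE' : ∀ k, Ders i (liftS σ k) ((Fin.cons (onehot 0 a)
        (fun j => push Fin.succ (E j)) : Fin (n'+1) → Fin (m+1) → Multiset D) k)
        ((Fin.cons a Γ' : Fin (n'+1) → Multiset D) k) ((Fin.cons 0 s : Fin (n'+1) → ℕ) k) := by
      intro k
      cases k using Fin.cases with
      | zero =>
        rw [Fin.cons_zero, Fin.cons_zero, Fin.cons_zero, liftS_zero]
        exact Ders.var 0 a
      | succ j =>
        rw [Fin.cons_succ, Fin.cons_succ, Fin.cons_succ, liftS_succ]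
        exact (hE j).rename (Fin.succ_injective m)
    obtain ⟨q, hq, hd⟩ := ih (liftS σ) _ _ hE'
    have hsum : (∑ k : Fin (n'+1), (Fin.cons (onehot 0 a)
        (fun j => push Fin.succ (E j)) : Fin (n'+1) → Fin (m+1) → Multiset D) k)
        = Fin.cons a (∑ k, E k) := by
      funext x
      rw [Finset.sum_apply, Fin.sum_univ_succ]
      cases x using Fin.cases with
      | zero =>
        simp only [Fin.cons_zero, Fin.cons_succ]
        rw [show (onehot 0 a : Fin (m+1) → Multiset D) 0 = a from if_pos rfl]
        rw [Finset.sum_eq_zero (fun j _ => push_succ_zero (E j)), add_zero]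
      | succ x =>
        simp only [Fin.cons_zero, Fin.cons_succ]
        rw [show (onehot 0 a : Fin (m+1) → Multiset D) x.succ = 0
          from if_neg (Fin.succ_ne_zero x)]
        rw [zero_add, Finset.sum_apply]
        exact Finset.sum_congr rfl fun j _ => push_succ_succ (E j) x
    have hssum : (∑ k : Fin (n'+1), (Fin.cons 0 s : Fin (n'+1) → ℕ) k) = ∑ k, s k := by
      rw [Fin.sum_univ_succ, Fin.cons_zero, zero_add]
      exact Finset.sum_congr rfl fun j _ => by rw [Fin.cons_succ]
    rw [hsum] at hd
    rw [hssum] at hq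
    exact ⟨q, hq, by rw [subst_lam]; exact Der.lam hd⟩
  | app l h hargs ih ihargs =>
    rename_i n' Γ' M' N' α' p'
    intro m σ E s hE
    have hsplit : ∀ k, ∃ E₁ E₂ s₁ s₂, E k = E₁ + E₂ ∧ s k = s₁ + s₂ ∧
        Ders i (σ k) E₁ (Γ' k) s₁ ∧
        Ders i (σ k) E₂ (((l.map Prod.fst).sum) k) s₂ := by
      intro k
      have h' : Ders i (σ k) (E k) (Γ' k + ((l.map Prod.fst).sum) k) (s k) := hE k
      obtain ⟨E₁, E₂, s₁, s₂, h1, h2, h3, h4⟩ := h'.split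
      exact ⟨E₁, E₂, s₁, s₂, h1, h2, h3, h4⟩
    choose E₁ E₂ s₁ s₂ hEadd hsadd hD1 hD2 using hsplit
    obtain ⟨q₀, hq₀, hd₀⟩ := ih σ E₁ s₁ hD1
    obtain ⟨l', htys, hders, hctx, hsz⟩ :=
      subst_args σ l (fun q hq E s h => ihargs q hq σ E s h) E₂ s₂ hD2
    have hd₀' : Der i (∑ k, E₁ k) (M'.subst σ) (i (↑(l'.map fun q => q.2.1), α')) q₀ := by
      rw [htys]; exact hd₀
    have happ := Der.app l' hd₀' hders
    rw [hctx] at happ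
    have hctx2 : (∑ k, E₁ k) + (∑ k, E₂ k) = ∑ k, E k := by
      rw [← Finset.sum_add_distrib]; exact Finset.sum_congr rfl fun k _ => (hEadd k).symm
    rw [hctx2] at happ
    have h5 : ∑ k, s k = (∑ k, s₁ k) + ∑ k, s₂ k := by
      rw [← Finset.sum_add_distrib]; exact Finset.sum_congr rfl fun k _ => hsadd k
    refine ⟨q₀ + (l'.map fun q => q.2.2).sum + 1, by omega, ?_⟩
    simp only [Tm.subst]
    exact happ

end Subst

section SubstInv
variable {D : Type} {i : Multiset D × D → D}

theorem subst_inv_args {n m : ℕ} {N : Tm n} {σ : Fin n → Tm m}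
    (ihN : ∀ {Δ : Fin m → Multiset D} {α : D} {p : ℕ}, Der i Δ (N.subst σ) α p →
      ∃ (Γ : Fin n → Multiset D) (E : Fin n → Fin m → Multiset D) (s : Fin n → ℕ) (p₀ : ℕ),
        Der i Γ N α p₀ ∧ (∀ k, Ders i (σ k) (E k) (Γ k) (s k)) ∧ Δ = ∑ k, E k) :
    ∀ (l : List ((Fin m → Multiset D) × D × ℕ)),
    (∀ q ∈ l, Der i q.1 (N.subst σ) q.2.1 q.2.2) →
    ∃ (l' : List ((Fin n → Multiset D) × D × ℕ)) (E : Fin n → Fin m → Multiset D)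
      (s : Fin n → ℕ),
      l'.map (fun q => q.2.1) = l.map (fun q => q.2.1) ∧
      (∀ q ∈ l', Der i q.1 N q.2.1 q.2.2) ∧
      (∀ k, Ders i (σ k) (E k) (((l'.map Prod.fst).sum) k) (s k)) ∧
      (l.map Prod.fst).sum = ∑ k, E k := by
  intro l
  induction l with
  | nil =>
    intro _
    refine ⟨[], fun _ => 0, fun _ => 0, rfl, fun q hq => absurd hq List.not_mem_nil,
      fun k => Ders.zero _, ?_⟩
    simp
  | cons q l ih =>
    intro hd
    obtain ⟨Γq, Eq, sq, pq, hdq, hDq, hΔq⟩ := ihN (hd q (.head l))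
    obtain ⟨l'', E'', s'', hty'', hd'', hD'', hΔ''⟩ := ih (fun r hr => hd r (.tail q hr))
    refine ⟨(Γq, q.2.1, pq) :: l'', fun k => Eq k + E'' k, fun k => sq k + s'' k, ?_, ?_, ?_, ?_⟩
    · rw [List.map_cons, List.map_cons, hty'']
    · intro r hr
      rcases List.mem_cons.1 hr with rfl | hr
      · exact hdq
      · exact hd'' r hr
    · intro k
      have : Ders i (σ k) (Eq k + E'' k) (Γq k + (((l''.map Prod.fst).sum) k))
          (sq k + s'' k) := (hDq k).add (hD'' k)
      exact this
    · rw [List.map_cons, List.sum_cons, hΔ'', hΔq, ← Finset.sum_add_distrib]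

theorem der_subst_inv :
    ∀ {n : ℕ} (M : Tm n) {m : ℕ} (σ : Fin n → Tm m) {Δ : Fin m → Multiset D} {α : D} {p : ℕ},
    Der i Δ (M.subst σ) α p →
    ∃ (Γ : Fin n → Multiset D) (E : Fin n → Fin m → Multiset D) (s : Fin n → ℕ) (p₀ : ℕ),
      Der i Γ M α p₀ ∧ (∀ k, Ders i (σ k) (E k) (Γ k) (s k)) ∧ Δ = ∑ k, E k := by
  intro n M
  induction M with
  | var k =>
    intro m σ Δ α p h
    simp only [Tm.subst] at h
    refine ⟨single k α, fun j => if j = k then Δ else 0, fun j => if j = k then p else 0,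
      0, Der.var k α, ?_, ?_⟩
    · intro j
      by_cases hj : j = k
      · subst hj
        simp only [if_pos rfl]
        rw [show single j α j = {α} from if_pos rfl]
        exact Ders.ofDer h
      · simp only [if_neg hj]
        rw [show single k α j = 0 from if_neg hj]
        exact Ders.zero _
    · rw [Finset.sum_ite_eq' Finset.univ k fun _ => Δ]
      simp
  | bot =>
    intro m σ Δ α p h
    simp only [Tm.subst] at h
    exact absurd h (der_bot_inv i)
  | lam M₀ ih =>
    intro m σ Δ α p h
    rw [subst_lam] at h
    obtain ⟨a, α₀, rfl, h₀⟩ := der_lam_inv i h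
    obtain ⟨Gp, Ep, sp, p₀, hd, hDs, hsum⟩ := ih (liftS σ) h₀
    have hE0 : Ep 0 = onehot 0 (Gp 0) := Ders.var_inv (by
      have := hDs 0
      rwa [liftS_zero] at this)
    have hsucc : ∀ j, ∃ E₀, Ep j.succ = push Fin.succ E₀ ∧
        Ders i (σ j) E₀ (Gp j.succ) (sp j.succ) := by
      intro j
      have := hDs j.succ
      rw [liftS_succ] at this
      exact Ders.rename_inv (Fin.succ_injective m) this
    choose E₀ hpush hD using hsucc
    have ha : a = Gp 0 := by
      have h1 := congrFun hsum 0
      rw [Fin.cons_zero, Finset.sum_apply, Fin.sum_univ_succ, hE0] at h1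
      rw [show onehot 0 (Gp 0) 0 = Gp 0 from if_pos rfl] at h1
      rw [Finset.sum_eq_zero (fun j _ => by rw [hpush j]; exact push_succ_zero (E₀ j)),
        add_zero] at h1
      exact h1
    have hΔ : Δ = ∑ j, E₀ j := by
      funext x
      have h1 := congrFun hsum x.succ
      rw [Fin.cons_succ, Finset.sum_apply, Fin.sum_univ_succ, hE0] at h1
      rw [show onehot 0 (Gp 0) x.succ = 0 from if_neg (Fin.succ_ne_zero x), zero_add] at h1
      rw [h1, Finset.sum_apply]
      exact Finset.sum_congr rfl fun j _ => by
        rw [hpush j]; exact push_succ_succ (E₀ j) x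
    refine ⟨Fin.tail Gp, E₀, fun j => sp j.succ, p₀, ?_, hD, hΔ⟩
    rw [ha]
    exact Der.lam (by rwa [Fin.cons_self_tail])
  | app M₁ M₂ ih₁ ih₂ =>
    intro m σ Δ α p h
    simp only [Tm.subst] at h
    cases h with
    | app l hhead hargs =>
      obtain ⟨Γ₁, E₁, s₁, p₁, hd₁, hDs₁, hΔ₁⟩ := ih₁ σ hhead
      obtain ⟨l', E'', s'', hty, hders, hDs₂, hΔ₂⟩ :=
        subst_inv_args (fun {Δ α p} h => ih₂ σ h) l hargs
      refine ⟨Γ₁ + (l'.map Prod.fst).sum, fun k => E₁ k + E'' k, fun k => s₁ k + s'' k,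
        p₁ + (l'.map fun q => q.2.2).sum + 1, ?_, ?_, ?_⟩
      · have hd₁' : Der i Γ₁ M₁ (i (↑(l'.map fun q => q.2.1), α)) p₁ := by
          rw [hty]; exact hd₁
        exact Der.app l' hd₁' hders
      · intro k
        exact (hDs₁ k).add (hDs₂ k)
      · rw [hΔ₁, hΔ₂, ← Finset.sum_add_distrib]

end SubstInv

section Subject
variable {D : Type} {i : Multiset D × D → D}

theorem red_list {n : ℕ} {T : Tm n} {l : List ((Fin n → Multiset D) × D × ℕ)}
    (h : ∀ q ∈ l, ∃ s' ≤ q.2.2, Der i q.1 T q.2.1 s') :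
    ∃ l' : List ((Fin n → Multiset D) × D × ℕ),
      l'.map Prod.fst = l.map Prod.fst ∧
      l'.map (fun q => q.2.1) = l.map (fun q => q.2.1) ∧
      (∀ q ∈ l', Der i q.1 T q.2.1 q.2.2) ∧
      (l'.map fun q => q.2.2).sum ≤ (l.map fun q => q.2.2).sum ∧
      (∀ q' ∈ l', ∃ q₀ ∈ l, q'.2.2 ≤ q₀.2.2) := by
  obtain ⟨l', hl'⟩ := exists_forall₂
    (P := fun (q b : (Fin n → Multiset D) × D × ℕ) =>
      b.1 = q.1 ∧ b.2.1 = q.2.1 ∧ b.2.2 ≤ q.2.2 ∧ Der i b.1 T b.2.1 b.2.2)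
    l (fun q hq => by
      obtain ⟨s', hs', hd⟩ := h q hq
      exact ⟨(q.1, q.2.1, s'), rfl, rfl, hs', hd⟩)
  refine ⟨l', ?_, ?_, ?_, ?_, ?_⟩
  · exact (forall₂_map_eq (fun a b hab => hab.1.symm) hl').symm
  · exact (forall₂_map_eq (fun a b hab => hab.2.1.symm) hl').symm
  · intro q hq
    obtain ⟨a, -, hab⟩ := forall₂_mem hl' q hq
    exact hab.2.2.2
  · exact forall₂_sum_le (fun a b hab => hab.2.2.1) hl'
  · intro q' hq'
    obtain ⟨a, ha, hab⟩ := forall₂_mem hl' q' hq'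
    exact ⟨a, ha, hab.2.2.1⟩

theorem exp_list {n : ℕ} {T : Tm n} {l : List ((Fin n → Multiset D) × D × ℕ)}
    (h : ∀ q ∈ l, ∃ s', Der i q.1 T q.2.1 s') :
    ∃ l' : List ((Fin n → Multiset D) × D × ℕ),
      l'.map Prod.fst = l.map Prod.fst ∧
      l'.map (fun q => q.2.1) = l.map (fun q => q.2.1) ∧
      (∀ q ∈ l', Der i q.1 T q.2.1 q.2.2) := by
  obtain ⟨l', hl'⟩ := exists_forall₂
    (P := fun (q b : (Fin n → Multiset D) × D × ℕ) =>
      b.1 = q.1 ∧ b.2.1 = q.2.1 ∧ Der i b.1 T b.2.1 b.2.2)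
    l (fun q hq => by
      obtain ⟨s', hd⟩ := h q hq
      exact ⟨(q.1, q.2.1, s'), rfl, rfl, hd⟩)
  refine ⟨l', ?_, ?_, ?_⟩
  · exact (forall₂_map_eq (fun a b hab => hab.1.symm) hl').symm
  · exact (forall₂_map_eq (fun a b hab => hab.2.1.symm) hl').symm
  · intro q hq
    obtain ⟨a, -, hab⟩ := forall₂_mem hl' q hq
    exact hab.2.2

/-- The substitution used for `subst1`. -/
def sigma0 {n : ℕ} (N : Tm n) : Fin (n+1) → Tm n :=
  Fin.cases (motive := fun _ => Tm n) N Tm.var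

theorem subst1_eq {n : ℕ} (M : Tm (n+1)) (N : Tm n) : M.subst1 N = M.subst (sigma0 N) := rfl

@[simp] theorem sigma0_zero {n : ℕ} (N : Tm n) : sigma0 N 0 = N := rfl
@[simp] theorem sigma0_succ {n : ℕ} (N : Tm n) (k : Fin n) : sigma0 N k.succ = .var k := by
  simp [sigma0]

/-- Key lemma for typed redex contraction. -/
theorem redex_der {n : ℕ} {Γ₀ : Fin n → Multiset D} {P : Tm (n+1)} {N : Tm n} {α : D} {p₀ : ℕ}
    (l : List ((Fin n → Multiset D) × D × ℕ))
    (hd : Der i (Fin.cons (↑(l.map fun q => q.2.1)) Γ₀) P α p₀)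
    (hargs : ∀ q ∈ l, Der i q.1 N q.2.1 q.2.2) :
    ∃ q ≤ p₀ + (l.map fun q => q.2.2).sum,
      Der i (Γ₀ + (l.map fun q => q.1).sum) (P.subst1 N) α q := by
  have hDs : ∀ k, Ders i (sigma0 N k)
      ((Fin.cons ((l.map Prod.fst).sum) (fun j => onehot j (Γ₀ j)) :
        Fin (n+1) → Fin n → Multiset D) k)
      ((Fin.cons (↑(l.map fun q => q.2.1)) Γ₀ : Fin (n+1) → Multiset D) k)
      ((Fin.cons ((l.map fun q => q.2.2).sum) (fun _ => 0) : Fin (n+1) → ℕ) k) := by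
    intro k
    cases k using Fin.cases with
    | zero =>
      simp only [Fin.cons_zero, sigma0_zero]
      exact ⟨l, rfl, hargs, rfl, rfl⟩
    | succ j =>
      simp only [Fin.cons_succ, sigma0_succ]
      exact Ders.var j (Γ₀ j)
  obtain ⟨q, hq, hder⟩ := der_subst hd (sigma0 N) _ _ hDs
  refine ⟨q, ?_, ?_⟩
  · refine le_trans hq ?_
    rw [Fin.sum_univ_succ, Fin.cons_zero]
    simp
  · rw [subst1_eq]
    have hctx : (∑ k : Fin (n+1), (Fin.cons ((l.map Prod.fst).sum)
        (fun j => onehot j (Γ₀ j)) : Fin (n+1) → Fin n → Multiset D) k)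
        = Γ₀ + (l.map fun q => q.1).sum := by
      rw [Fin.sum_univ_succ, Fin.cons_zero]
      have : (∑ j : Fin n, (Fin.cons ((l.map Prod.fst).sum)
          (fun j => onehot j (Γ₀ j)) : Fin (n+1) → Fin n → Multiset D) j.succ) = Γ₀ := by
        rw [Finset.sum_congr rfl (fun j _ => by rw [Fin.cons_succ])]
        exact sum_onehot Γ₀
      rw [this, add_comm]
    rwa [hctx] at hder

theorem subject_red_step (hi : Function.Injective i) :
    ∀ {n : ℕ} {M M' : Tm n}, Beta M M' →
    ∀ {Γ : Fin n → Multiset D} {α : D} {p : ℕ}, Der i Γ M α p →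
    ∃ p' ≤ p, Der i Γ M' α p' := by
  intro n M M' hβ
  induction hβ with
  | redex P N =>
    intro Γ α p h
    cases h with
    | app l hhead hargs =>
      obtain ⟨a, α₀, heq, hP⟩ := der_lam_inv i hhead
      have hpair := hi heq
      rw [Prod.mk.injEq] at hpair
      obtain ⟨h1, h2⟩ := hpair
      rw [← h1, ← h2] at hP
      obtain ⟨q, hq, hd⟩ := redex_der l hP hargs
      exact ⟨q, by omega, hd⟩
  | appL hβ ih =>
    intro Γ α p h
    cases h with
    | app l hhead hargs =>
      obtain ⟨p', hp', hd'⟩ := ih hhead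
      exact ⟨_, by omega, Der.app l hd' hargs⟩
  | appR hβ ih =>
    intro Γ α p h
    cases h with
    | app l hhead hargs =>
      obtain ⟨l', hfst, htys, hders, hsz, -⟩ :=
        red_list (fun q hq => ih (hargs q hq))
      rw [← htys] at hhead
      have := Der.app l' hhead hders
      rw [hfst] at this
      exact ⟨_, by omega, this⟩
  | lam hβ ih =>
    intro Γ α p h
    obtain ⟨a, α₀, rfl, hP⟩ := der_lam_inv i h
    obtain ⟨p', hp', hd'⟩ := ih hP
    exact ⟨p', hp', Der.lam hd'⟩

theorem subject_exp_step :
    ∀ {n : ℕ} {M M' : Tm n}, Beta M M' →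
    ∀ {Γ : Fin n → Multiset D} {α : D} {p : ℕ}, Der i Γ M' α p →
    ∃ p', Der i Γ M α p' := by
  intro n M M' hβ
  induction hβ with
  | @redex n P N =>
    intro Γ α p h
    rw [subst1_eq] at h
    obtain ⟨Gp, E, s, p₀, hd, hDs, hΔ⟩ := der_subst_inv P (sigma0 N) h
    obtain ⟨l, hty, hdl, hc, -⟩ : Ders i N (E 0) (Gp 0) (s 0) := by
      have := hDs 0
      rwa [sigma0_zero] at this
    have hsucc : ∀ k : Fin n, E k.succ = onehot k (Gp k.succ) := by
      intro k
      have := hDs k.succ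
      rw [sigma0_succ] at this
      exact Ders.var_inv this
    have hd' : Der i (Fin.tail Gp) (.lam P) (i (↑(l.map fun q => q.2.1), α)) p₀ := by
      rw [hty]
      exact Der.lam (by rwa [Fin.cons_self_tail] : Der i (Fin.cons (Gp 0) (Fin.tail Gp)) P α p₀)
    have happ := Der.app l hd' hdl
    have hctx : Γ = Fin.tail Gp + (l.map fun q => q.1).sum := by
      rw [hΔ, Fin.sum_univ_succ, ← hc]
      rw [Finset.sum_congr rfl (fun j _ => hsucc j)]
      have : (∑ j : Fin n, onehot j (Gp j.succ)) = Fin.tail Gp := sum_onehot (Fin.tail Gp)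
      rw [this, add_comm]
    rw [← hctx] at happ
    exact ⟨_, happ⟩
  | appL hβ ih =>
    intro Γ α p h
    cases h with
    | app l hhead hargs =>
      obtain ⟨p', hd'⟩ := ih hhead
      exact ⟨_, Der.app l hd' hargs⟩
  | appR hβ ih =>
    intro Γ α p h
    cases h with
    | app l hhead hargs =>
      obtain ⟨l', hfst, htys, hders⟩ := exp_list (fun q hq => ih (hargs q hq))
      rw [← htys] at hhead
      have := Der.app l' hhead hders
      rw [hfst] at this
      exact ⟨_, this⟩
  | lam hβ ih =>
    intro Γ α p h
    obtain ⟨a, α₀, rfl, hP⟩ := der_lam_inv i h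
    obtain ⟨p', hd'⟩ := ih hP
    exact ⟨p', Der.lam hd'⟩

end Subject

section DaLemmas
variable {D : Type} {i : Multiset D × D → D}

@[simp] theorem da_var {n : ℕ} (k : Fin n) : Da (.var k : Tm n) = .var k := rfl
@[simp] theorem da_bot {n : ℕ} : Da (.bot : Tm n) = .bot := rfl

theorem da_lam_bot {n : ℕ} {M : Tm (n+1)} (h : Da M = .bot) : Da (.lam M) = .bot := by
  simp [Da, h]

theorem da_lam_not_bot {n : ℕ} {M : Tm (n+1)} (h : Da M ≠ .bot) :
    Da (.lam M) = .lam (Da M) := by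
  cases hd : Da M with
  | bot => exact absurd hd h
  | var k => simp [Da, hd]
  | lam P => simp [Da, hd]
  | app P Q => simp [Da, hd]

theorem da_app_bot {n : ℕ} {M N : Tm n} (h : Da M = .bot) : Da (.app M N) = .bot := by
  simp [Da, h]

theorem da_app_lam {n : ℕ} {M N : Tm n} {P : Tm (n+1)} (h : Da M = .lam P) :
    Da (.app M N) = .bot := by
  simp [Da, h]

theorem da_app_var {n : ℕ} {M N : Tm n} {k : Fin n} (h : Da M = .var k) :
    Da (.app M N) = .app (Da M) (Da N) := by
  simp [Da, h]

theorem da_app_app {n : ℕ} {M N P Q : Tm n} (h : Da M = .app P Q) :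
    Da (.app M N) = .app (Da M) (Da N) := by
  simp [Da, h]

end DaLemmas
section DaMore
variable {D : Type} {i : Multiset D × D → D}

theorem da_le {n : ℕ} : ∀ (t : Tm n), Le (Da t) t := by
  intro t
  induction t with
  | var k => exact Le.var k
  | bot => exact Le.bot _
  | lam M ih =>
    by_cases h : Da M = .bot
    · rw [da_lam_bot h]; exact Le.bot _
    · rw [da_lam_not_bot h]; exact Le.lam ih
  | app M N ihM ihN =>
    cases hd : Da M with
    | bot => rw [da_app_bot hd]; exact Le.bot _
    | lam P => rw [da_app_lam hd]; exact Le.bot _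
    | var k => rw [da_app_var hd]; exact Le.app ihM ihN
    | app P Q => rw [da_app_app hd]; exact Le.app ihM ihN

theorem da_eq_lam {n : ℕ} {t : Tm n} {Q : Tm (n+1)} (h : Da t = .lam Q) :
    ∃ P, t = .lam P ∧ Da P = Q := by
  cases t with
  | var k => simp at h
  | bot => simp at h
  | lam P =>
    by_cases hP : Da P = .bot
    · rw [da_lam_bot hP] at h; cases h
    · rw [da_lam_not_bot hP] at h
      cases h
      exact ⟨P, rfl, rfl⟩
  | app M N =>
    cases hd : Da M with
    | bot => rw [da_app_bot hd] at h; cases h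
    | lam P => rw [da_app_lam hd] at h; cases h
    | var k => rw [da_app_var hd] at h; cases h
    | app P R => rw [da_app_app hd] at h; cases h

theorem le_not_bot {n : ℕ} {t s : Tm n} (h : Le t s) (ht : t ≠ .bot) : s ≠ .bot := by
  cases h with
  | bot => exact absurd rfl ht
  | var k => exact fun hs => by cases hs
  | lam _ => exact fun hs => by cases hs
  | app _ _ => exact fun hs => by cases hs

theorem beta_da_le {n : ℕ} {t s : Tm n} (hβ : Beta t s) : Le (Da t) (Da s) := by
  induction hβ with
  | redex P N =>
    have hbot : Da (Tm.app (.lam P) N) = .bot := by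
      by_cases hP : Da P = .bot
      · exact da_app_bot (da_lam_bot hP)
      · exact da_app_lam (da_lam_not_bot hP)
    rw [hbot]; exact Le.bot _
  | @appL n M M' N hβ ih =>
    cases hd : Da M with
    | bot => rw [da_app_bot hd]; exact Le.bot _
    | lam P => rw [da_app_lam hd]; exact Le.bot _
    | var k =>
      have hM' : Da M' = .var k := le_var_inv (hd ▸ ih)
      rw [da_app_var hd, da_app_var hM']
      exact Le.app ih (Le.refl _)
    | app P Q =>
      obtain ⟨s₁, s₂, hs, -, -⟩ := le_app_inv (hd ▸ ih)
      rw [da_app_app hd, da_app_app hs]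
      exact Le.app ih (Le.refl _)
  | @appR n M N N' hβ ih =>
    cases hd : Da M with
    | bot => rw [da_app_bot hd]; exact Le.bot _
    | lam P => rw [da_app_lam hd]; exact Le.bot _
    | var k => rw [da_app_var hd, da_app_var hd]; exact Le.app (Le.refl _) ih
    | app P Q => rw [da_app_app hd, da_app_app hd]; exact Le.app (Le.refl _) ih
  | @lam n M M' hβ ih =>
    by_cases h : Da M = .bot
    · rw [da_lam_bot h]; exact Le.bot _
    · rw [da_lam_not_bot h]
      have h' : Da M' ≠ .bot := le_not_bot ih h
      rw [da_lam_not_bot h']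
      exact Le.lam ih

end DaMore

section BF
open Relation

theorem bf_rename : ∀ {n m : ℕ} (f : Fin n → Fin m) (t : Tm n),
    BotFree t → BotFree (t.rename f) := by
  intro n m f t
  induction t generalizing m with
  | var k => intro _; trivial
  | bot => intro h; exact h
  | lam M ih =>
    intro h
    exact ih _ h
  | app M N ihM ihN =>
    intro h
    exact ⟨ihM f h.1, ihN f h.2⟩

theorem bf_subst : ∀ {n m : ℕ} (σ : Fin n → Tm m) (t : Tm n),
    BotFree t → (∀ k, BotFree (σ k)) → BotFree (t.subst σ) := by
  intro n m σ t
  induction t generalizing m with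
  | var k => intro _ hσ; exact hσ k
  | bot => intro h _; exact h
  | lam M ih =>
    intro h hσ
    refine ih _ h ?_
    intro k
    cases k using Fin.cases with
    | zero => trivial
    | succ j => exact bf_rename Fin.succ (σ j) (hσ j)
  | app M N ihM ihN =>
    intro h hσ
    exact ⟨ihM σ h.1 hσ, ihN σ h.2 hσ⟩

theorem bf_subst1 {n : ℕ} {M : Tm (n+1)} {N : Tm n}
    (hM : BotFree M) (hN : BotFree N) : BotFree (M.subst1 N) := by
  refine bf_subst _ M hM ?_
  intro k
  cases k using Fin.cases with
  | zero => exact hN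
  | succ j => trivial

theorem bf_beta {n : ℕ} {t s : Tm n} (hβ : Beta t s) (ht : BotFree t) : BotFree s := by
  induction hβ with
  | redex P N => exact bf_subst1 ht.1 ht.2
  | appL _ ih => exact ⟨ih ht.1, ht.2⟩
  | appR _ ih => exact ⟨ht.1, ih ht.2⟩
  | lam _ ih => exact ih ht

theorem bf_star {n : ℕ} {t s : Tm n} (h : ReflTransGen (fun a b : Tm n => Beta a b) t s)
    (ht : BotFree t) : BotFree s := by
  induction h with
  | refl => exact ht
  | tail _ hstep ih => exact bf_beta hstep ih

theorem rtg_lam {n : ℕ} {M M' : Tm (n+1)}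
    (h : ReflTransGen (fun a b : Tm (n+1) => Beta a b) M M') :
    ReflTransGen (fun a b : Tm n => Beta a b) (.lam M) (.lam M') :=
  ReflTransGen.lift Tm.lam (fun _ _ hab => Beta.lam hab) _ _ h

theorem rtg_appL {n : ℕ} {M M' N : Tm n}
    (h : ReflTransGen (fun a b : Tm n => Beta a b) M M') :
    ReflTransGen (fun a b : Tm n => Beta a b) (.app M N) (.app M' N) :=
  ReflTransGen.lift (fun M => Tm.app M N) (fun _ _ hab => Beta.appL hab) _ _ h

theorem rtg_appR {n : ℕ} {M N N' : Tm n}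
    (h : ReflTransGen (fun a b : Tm n => Beta a b) N N') :
    ReflTransGen (fun a b : Tm n => Beta a b) (.app M N) (.app M N') :=
  ReflTransGen.lift (fun N => Tm.app M N) (fun _ _ hab => Beta.appR hab) _ _ h

end BF

section Transport
open Relation
variable {D : Type} {i : Multiset D × D → D}

theorem red_star (hi : Function.Injective i) {n : ℕ} {M M' : Tm n}
    (h : ReflTransGen (fun a b : Tm n => Beta a b) M M')
    {Γ : Fin n → Multiset D} {α : D} {p : ℕ} (hd : Der i Γ M α p) :
    ∃ p' ≤ p, Der i Γ M' α p' := by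
  induction h with
  | refl => exact ⟨p, le_refl p, hd⟩
  | tail _ hstep ih =>
    obtain ⟨p', hp', hd'⟩ := ih
    obtain ⟨p'', hp'', hd''⟩ := subject_red_step hi hstep hd'
    exact ⟨p'', le_trans hp'' hp', hd''⟩

theorem exp_star {n : ℕ} {M M' : Tm n}
    (h : ReflTransGen (fun a b : Tm n => Beta a b) M M')
    {Γ : Fin n → Multiset D} {α : D}
    (hd : ∃ p, Der i Γ M' α p) : ∃ p, Der i Γ M α p := by
  induction h with
  | refl => exact hd
  | tail _ hstep ih =>
    obtain ⟨p, hdp⟩ := hd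
    obtain ⟨p', hd'⟩ := subject_exp_step hstep hdp
    exact ih ⟨p', hd'⟩

theorem da_star {n : ℕ} {M M' : Tm n}
    (h : ReflTransGen (fun a b : Tm n => Beta a b) M M')
    {Γ : Fin n → Multiset D} {α : D} {p : ℕ} (hd : Der i Γ (Da M) α p) :
    Der i Γ (Da M') α p := by
  induction h with
  | refl => exact hd
  | tail _ hstep ih => exact der_mono i ih (beta_da_le hstep)

theorem eqv_der_iff (hi : Function.Injective i) {n : ℕ} {M M' : Tm n}
    (h : EqvGen (fun a b : Tm n => Beta a b) M M')
    {Γ : Fin n → Multiset D} {α : D} :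
    (∃ p, Der i Γ M α p) ↔ (∃ p, Der i Γ M' α p) := by
  induction h with
  | rel a b hab =>
    constructor
    · rintro ⟨p, hd⟩
      obtain ⟨p', -, hd'⟩ := subject_red_step hi hab hd
      exact ⟨p', hd'⟩
    · rintro ⟨p, hd⟩
      obtain ⟨p', hd'⟩ := subject_exp_step hab hd
      exact ⟨p', hd'⟩
  | refl a => exact Iff.rfl
  | symm a b _ ih => exact ih.symm
  | trans a b c _ _ ih₁ ih₂ => exact ih₁.trans ih₂

theorem rtg_eqvgen {n : ℕ} {M M' : Tm n}
    (h : ReflTransGen (fun a b : Tm n => Beta a b) M M') :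
    EqvGen (fun a b : Tm n => Beta a b) M' M := by
  induction h with
  | refl => exact EqvGen.refl M
  | tail _ hstep ih => exact EqvGen.trans _ _ _ (EqvGen.symm _ _ (EqvGen.rel _ _ hstep)) ih

end Transport

section Forward
open Relation
variable {D : Type} {i : Multiset D × D → D}

theorem fwd_args (hi : Function.Injective i) (m : ℕ)
    (IH : ∀ m', m' < m → ∀ {n' : ℕ} (M : Tm n') (Γ : Fin n' → Multiset D) (α : D),
      BotFree M → Der i Γ M α m' →
      ∃ M', ReflTransGen (fun a b : Tm n' => Beta a b) M M' ∧ BotFree M' ∧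
        ∃ q ≤ m', Der i Γ (Da M') α q) {n : ℕ} :
    ∀ (l : List ((Fin n → Multiset D) × D × ℕ)) (N : Tm n), BotFree N →
    (∀ q ∈ l, q.2.2 < m) → (∀ q ∈ l, ∃ s ≤ q.2.2, Der i q.1 N q.2.1 s) →
    ∃ N', ReflTransGen (fun a b : Tm n => Beta a b) N N' ∧ BotFree N' ∧
      ∃ l' : List ((Fin n → Multiset D) × D × ℕ),
        l'.map Prod.fst = l.map Prod.fst ∧
        l'.map (fun q => q.2.1) = l.map (fun q => q.2.1) ∧
        (∀ q ∈ l', Der i q.1 (Da N') q.2.1 q.2.2) ∧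
        (l'.map fun q => q.2.2).sum ≤ (l.map fun q => q.2.2).sum := by
  intro l
  induction l with
  | nil =>
    intro N hbfN _ _
    exact ⟨N, .refl, hbfN, [], rfl, rfl, fun q hq => absurd hq List.not_mem_nil,
      le_refl _⟩
  | cons q l ih =>
    intro N hbfN hlt hders
    obtain ⟨s₀, hs₀, hd₀⟩ := hders q (.head l)
    obtain ⟨N₁, hr1, hbf1, s₁, hs₁, hdDa1⟩ :=
      IH s₀ (lt_of_le_of_lt hs₀ (hlt q (.head l))) N q.1 q.2.1 hbfN hd₀
    obtain ⟨N', hr2, hbf2, l₂, hfst₂, htys₂, hders₂, hsz₂⟩ :=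
      ih N₁ hbf1 (fun r hr => hlt r (.tail q hr))
        (fun r hr => by
          obtain ⟨s, hs, hd⟩ := hders r (.tail q hr)
          obtain ⟨s', hs', hd'⟩ := red_star hi hr1 hd
          exact ⟨s', le_trans hs' hs, hd'⟩)
    refine ⟨N', hr1.trans hr2, hbf2, (q.1, q.2.1, s₁) :: l₂, ?_, ?_, ?_, ?_⟩
    · rw [List.map_cons, List.map_cons, hfst₂]
    · rw [List.map_cons, List.map_cons, htys₂]
    · intro r hr
      rcases List.mem_cons.1 hr with rfl | hr
      · exact da_star hr2 hdDa1
      · exact hders₂ r hr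
    · rw [List.map_cons, List.sum_cons, List.map_cons, List.sum_cons]
      have h2 : s₁ ≤ q.2.2 := le_trans hs₁ hs₀
      have h6 : ((q.1, q.2.1, s₁) : (Fin n → Multiset D) × D × ℕ).2.2 = s₁ := rfl
      rw [h6]
      omega

theorem forward (hi : Function.Injective i) :
    ∀ (m : ℕ) {n : ℕ} (M : Tm n) (Γ : Fin n → Multiset D) (α : D),
    BotFree M → Der i Γ M α m →
    ∃ M', ReflTransGen (fun a b : Tm n => Beta a b) M M' ∧ BotFree M' ∧
      ∃ q ≤ m, Der i Γ (Da M') α q := by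
  intro m
  induction m using Nat.strong_induction_on with
  | _ m IH =>
  intro n M
  induction M with
  | var k =>
    intro Γ α _ hder
    exact ⟨.var k, .refl, trivial, m, le_refl m, hder⟩
  | bot =>
    intro Γ α hbf _
    exact hbf.elim
  | lam M₀ ihM₀ =>
    intro Γ α hbf hder
    obtain ⟨a, α₀, rfl, hP⟩ := der_lam_inv i hder
    obtain ⟨M₀', hrtg, hbf', m', hm', hd'⟩ := ihM₀ (Fin.cons a Γ) α₀ hbf hP
    have hnb : Da M₀' ≠ .bot := fun h => der_bot_inv i (h ▸ hd')
    refine ⟨.lam M₀', rtg_lam hrtg, hbf', m', hm', ?_⟩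
    rw [da_lam_not_bot hnb]
    exact Der.lam hd'
  | app H N ihH ihN =>
    intro Γ' α hbf hder
    cases hder with
    | app l hhead hargs =>
      rename_i m₀ Γ₀
      obtain ⟨H₁, hrtgH, hbfH₁, m₀', hm₀', hdH₁⟩ :=
        IH m₀ (by omega) H Γ₀ (i (↑(l.map fun q => q.2.1), α)) hbf.1 hhead
      cases hdc : Da H₁ with
      | bot =>
        rw [hdc] at hdH₁
        exact (der_bot_inv i hdH₁).elim
      | lam Q =>
        obtain ⟨P, rfl, hDaP⟩ := da_eq_lam hdc
        rw [hdc] at hdH₁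
        obtain ⟨a', α₀', heq, hQ⟩ := der_lam_inv i hdH₁
        have hpair := hi heq
        rw [Prod.mk.injEq] at hpair
        obtain ⟨h1, h2⟩ := hpair
        rw [← h1, ← h2] at hQ
        have hP : Der i (Fin.cons (↑(l.map fun q => q.2.1)) Γ₀) P α m₀' :=
          der_mono i hQ (hDaP ▸ da_le P)
        obtain ⟨qq, hqq, hdq⟩ := redex_der l hP hargs
        have hbfsub : BotFree (P.subst1 N) := bf_subst1 hbfH₁ hbf.2
        obtain ⟨R, hrtgR, hbfR, r, hr, hdR⟩ :=
          IH qq (by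
            have := List.single_le_sum (l := l.map fun q => q.2.2)
            omega) (P.subst1 N) _ α hbfsub hdq
        refine ⟨R, ?_, hbfR, r, by omega, hdR⟩
        exact ((rtg_appL hrtgH).trans
          (ReflTransGen.single (Beta.redex P N))).trans hrtgR
      | var k =>
        obtain ⟨N', hrN, hbfN', l', hfst, htys, hders', hsz⟩ :=
          fwd_args hi (m₀ + (l.map fun q => q.2.2).sum + 1) IH l N hbf.2
            (fun q hq => by
              have h1 : q.2.2 ≤ (l.map fun r => r.2.2).sum :=
                List.single_le_sum (fun _ _ => Nat.zero_le _) _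
                  (List.mem_map_of_mem hq)
              omega)
            (fun q hq => ⟨q.2.2, le_refl _, hargs q hq⟩)
        rw [← htys] at hdH₁
        have happ := Der.app l' hdH₁ hders'
        rw [hfst] at happ
        refine ⟨.app H₁ N', (rtg_appL hrtgH).trans (rtg_appR hrN),
          ⟨hbfH₁, hbfN'⟩, m₀' + (l'.map fun q => q.2.2).sum + 1, by omega, ?_⟩
        rw [da_app_var hdc]
        exact happ
      | app P Q =>
        obtain ⟨N', hrN, hbfN', l', hfst, htys, hders', hsz⟩ :=
          fwd_args hi (m₀ + (l.map fun q => q.2.2).sum + 1) IH l N hbf.2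
            (fun q hq => by
              have h1 : q.2.2 ≤ (l.map fun r => r.2.2).sum :=
                List.single_le_sum (fun _ _ => Nat.zero_le _) _
                  (List.mem_map_of_mem hq)
              omega)
            (fun q hq => ⟨q.2.2, le_refl _, hargs q hq⟩)
        rw [← htys] at hdH₁
        have happ := Der.app l' hdH₁ hders'
        rw [hfst] at happ
        refine ⟨.app H₁ N', (rtg_appL hrtgH).trans (rtg_appR hrN),
          ⟨hbfH₁, hbfN'⟩, m₀' + (l'.map fun q => q.2.2).sum + 1, by omega, ?_⟩
        rw [da_app_app hdc]
        exact happ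

end Forward

/-- Approximation theorem: `Γ ⊢ M : α` is derivable iff `Γ ⊢ t : α` is derivable for
some finite approximant `t = ω(M') ∈ BT*(M)` with `M' =_β M`.  Consequently the logical
interpretation of `M` is the union of the logical interpretations of its finite
Böhm-tree approximants. -/
theorem stmt_13 {D : Type} [Infinite D] (i : Multiset D × D → D)
    (hi : Function.Injective i) {n : ℕ} (M : Tm n) (hM : BotFree M) :
    (∀ (Γ : Fin n → Multiset D) (α : D),
      (∃ m, Der i Γ M α m) ↔
        ∃ M' : Tm n, BotFree M' ∧ Relation.EqvGen (fun a b : Tm n => Beta a b) M' M ∧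
          ∃ m, Der i Γ (Da M') α m) ∧
    {p : (Fin n → Multiset D) × D | ∃ m, Der i p.1 M p.2 m} =
      ⋃ M' ∈ {M' : Tm n | BotFree M' ∧ Relation.EqvGen (fun a b : Tm n => Beta a b) M' M},
        {p : (Fin n → Multiset D) × D | ∃ m, Der i p.1 (Da M') p.2 m} := by
  have hmain : ∀ (Γ : Fin n → Multiset D) (α : D),
      (∃ m, Der i Γ M α m) ↔
        ∃ M' : Tm n, BotFree M' ∧ Relation.EqvGen (fun a b : Tm n => Beta a b) M' M ∧
          ∃ m, Der i Γ (Da M') α m := by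
    intro Γ α
    constructor
    · rintro ⟨m, hd⟩
      obtain ⟨M'', hrtg, hbf', q, -, hdq⟩ := forward hi m M Γ α hM hd
      exact ⟨M'', hbf', rtg_eqvgen hrtg, q, hdq⟩
    · rintro ⟨M', hbf', heqv, m, hd⟩
      have hd' : Der i Γ M' α m := der_mono i hd (da_le M')
      exact (eqv_der_iff hi heqv).1 ⟨m, hd'⟩
  refine ⟨hmain, ?_⟩
  ext p
  obtain ⟨Γ, α⟩ := p
  simp only [Set.mem_setOf_eq, Set.mem_iUnion]
  rw [hmain Γ α]
  constructor
  · rintro ⟨M', h1, h2, h3⟩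
    exact ⟨M', ⟨h1, h2⟩, h3⟩
  · rintro ⟨M', ⟨h1, h2⟩, h3⟩
    exact ⟨M', h1, h2, h3⟩
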